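/- For any graph H (loops allowed), the set system D_H = (V(H), S), where X ∈ S if and only if the principal submatrix A(H)[X] (the adjacency matrix over GF(2) of the induced subgraph H[X]) is invertible, is a delta-matroid. (The empty matrix is invertible by convention, so ∅ ∈ S.) -/

import Mathlib

open Matrix

variable {V : Type*} [Fintype V] [DecidableEq V] {U : Type*} [DecidableEq U]

/-- A set system: a finite ground set together with a family of subsets. -/
structure SetSystem (U : Type*) [DecidableEq U] where
  ground : Finset U
  sets : Set (Finset U)

/-- Delta-matroid: `S` nonempty and the symmetric exchange axiom holds. -/
def IsDeltaMatroid (D : SetSystem U) : Prop :=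
  D.sets.Nonempty ∧
  ∀ X ∈ D.sets, ∀ Y ∈ D.sets, ∀ x ∈ symmDiff X Y,
    ∃ y ∈ symmDiff X Y, symmDiff X {x, y} ∈ D.sets

/-- The principal submatrix `A[X]` of a GF(2) matrix is invertible (the empty
matrix, for `X = ∅`, is invertible by convention). -/
def PrincInv (A : Matrix V V (ZMod 2)) (X : Finset V) : Prop :=
  IsUnit (A.submatrix (fun i : X => (i : V)) (fun i : X => (i : V))).det

/-- The set system `D_H = (V(H), S)` of a graph `H` (loops allowed) with GF(2)
adjacency matrix `A`: `X ∈ S` iff `A(H[X]) = A[X]` is invertible. -/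
def DM (A : Matrix V V (ZMod 2)) : SetSystem V :=
  ⟨Finset.univ, {X | PrincInv A X}⟩

/- ----------------- auxiliary development ----------------- -/

/-- The mixed projection of the graph of `A`: on coordinates in `X` take `(Av)_i`,
elsewhere take `v_i`. -/
def Tmap (A : Matrix V V (ZMod 2)) (X : Finset V) :
    (V → ZMod 2) →ₗ[ZMod 2] (V → ZMod 2) where
  toFun v := fun i => if i ∈ X then A.mulVec v i else v i
  map_add' v w := by funext i; by_cases h : i ∈ X <;> simp [h, Matrix.mulVec_add]
  map_smul' c v := by funext i; by_cases h : i ∈ X <;> simp [h, Matrix.mulVec_smul]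

/-- The complementary mixed projection. -/
def Smap (A : Matrix V V (ZMod 2)) (X : Finset V) :
    (V → ZMod 2) →ₗ[ZMod 2] (V → ZMod 2) where
  toFun v := fun i => if i ∈ X then v i else A.mulVec v i
  map_add' v w := by funext i; by_cases h : i ∈ X <;> simp [h, Matrix.mulVec_add]
  map_smul' c v := by funext i; by_cases h : i ∈ X <;> simp [h, Matrix.mulVec_smul]

@[simp] lemma Tmap_apply (A : Matrix V V (ZMod 2)) (X : Finset V) (v : V → ZMod 2) (i : V) :
    Tmap A X v i = if i ∈ X then A.mulVec v i else v i := rfl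

@[simp] lemma Smap_apply (A : Matrix V V (ZMod 2)) (X : Finset V) (v : V → ZMod 2) (i : V) :
    Smap A X v i = if i ∈ X then v i else A.mulVec v i := rfl

lemma mulVec_restrict (A : Matrix V V (ZMod 2)) (X : Finset V) (v : V → ZMod 2)
    (hv : ∀ i ∉ X, v i = 0) (j : X) :
    (A.submatrix (fun i : X => (i : V)) (fun i : X => (i : V))).mulVec
      (fun i : X => v (i : V)) j = A.mulVec v (j : V) := by
  simp only [Matrix.mulVec, dotProduct, Matrix.submatrix_apply]
  rw [Finset.sum_coe_sort X (fun i => A (j : V) i * v i)]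
  exact Finset.sum_subset (Finset.subset_univ X) (fun i _ hi => by simp [hv i hi])

/-- Kernel characterization of injectivity of `Tmap`. -/
lemma tmap_inj_iff (B : Matrix V V (ZMod 2)) (W : Finset V) :
    Function.Injective (Tmap B W) ↔
      ∀ v : V → ZMod 2, (∀ i ∉ W, v i = 0) → (∀ i ∈ W, B.mulVec v i = 0) → v = 0 := by
  rw [injective_iff_map_eq_zero]
  constructor
  · intro h v h1 h2
    refine h v (funext fun i => ?_)
    by_cases hi : i ∈ W
    · simpa [hi] using h2 i hi
    · simpa [hi] using h1 i hi
  · intro h v hv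
    refine h v (fun i hi => ?_) (fun i hi => ?_) <;> have := congrFun hv i <;>
      simpa [hi] using this

lemma princInv_iff (A : Matrix V V (ZMod 2)) (X : Finset V) :
    PrincInv A X ↔ Function.Injective (Tmap A X) := by
  rw [tmap_inj_iff]
  unfold PrincInv
  rw [isUnit_iff_ne_zero, Ne, ← Matrix.exists_mulVec_eq_zero_iff]
  push_neg
  constructor
  · intro h v h1 h2
    have hw : (A.submatrix (fun i : X => (i : V)) (fun i : X => (i : V))).mulVec
        (fun i : X => v (i : V)) = 0 := by
      funext j
      rw [mulVec_restrict A X v h1 j]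
      exact h2 j j.2
    by_contra hvne
    have : (fun i : X => v (i : V)) ≠ 0 := by
      intro h0
      apply hvne
      funext i
      by_cases hi : i ∈ X
      · exact congrFun h0 ⟨i, hi⟩
      · exact h1 i hi
    exact h _ this hw
  · intro h w hw hmul
    set v : V → ZMod 2 := fun i => if hi : i ∈ X then w ⟨i, hi⟩ else 0 with hvdef
    have h1 : ∀ i ∉ X, v i = 0 := fun i hi => by simp [hvdef, hi]
    have hvw : (fun i : X => v (i : V)) = w := by
      funext i
      simp [hvdef, i.2]
    have h2 : ∀ i ∈ X, A.mulVec v i = 0 := by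
      intro i hi
      rw [← mulVec_restrict A X v h1 ⟨i, hi⟩, hvw, hmul]
      rfl
    have hv0 : v = 0 := h v h1 h2
    apply hw
    rw [← hvw, hv0]
    rfl

lemma princInv_empty (A : Matrix V V (ZMod 2)) : PrincInv A (∅ : Finset V) := by
  unfold PrincInv
  haveI : IsEmpty (↥(∅ : Finset V)) := Finset.isEmpty_coe_sort.mpr rfl
  rw [Matrix.det_isEmpty]
  exact isUnit_one

lemma zmod2_ne_zero : ∀ a : ZMod 2, a ≠ 0 → a = 1 := by decide

/-- The base case of exchange: for symmetric `B` with `T_Z` injective and `x ∈ Z`,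
there is `y ∈ Z` with `B[{x,y}]` nonsingular. -/
lemma exchange_base (B : Matrix V V (ZMod 2)) (hB : B.IsSymm) (Z : Finset V)
    (hZ : Function.Injective (Tmap B Z)) {x : V} (hx : x ∈ Z) :
    ∃ y ∈ Z, Function.Injective (Tmap B ({x, y} : Finset V)) := by
  rw [tmap_inj_iff] at hZ
  by_cases hxx : B x x = 0
  · -- find y ∈ Z with B y x ≠ 0
    have hex : ∃ y ∈ Z, B y x ≠ 0 := by
      by_contra hno
      push_neg at hno
      have := hZ (Pi.single x 1)
        (fun i hi => Pi.single_eq_of_ne (fun h => hi (by rw [h]; exact hx)) 1)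
        (fun i hi => by
          have : B.mulVec (Pi.single x 1) i = B i x := by
            simp [Matrix.mulVec_single]
          rw [this, hno i hi])
      have h1 := congrFun this x
      simp at h1
    obtain ⟨y, hyZ, hyx⟩ := hex
    have hne : y ≠ x := fun h => hyx (h ▸ hxx)
    have hBxy : B x y = 1 := by
      have := congrFun (congrFun hB y) x
      simp only [Matrix.transpose_apply] at this
      rw [this]
      exact zmod2_ne_zero _ hyx
    have hByx : B y x = 1 := zmod2_ne_zero _ hyx
    refine ⟨y, hyZ, (tmap_inj_iff B _).mpr fun v h1 h2 => ?_⟩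
    have key : ∀ j, B.mulVec v j = B j x * v x + B j y * v y := by
      intro j
      simp only [Matrix.mulVec, dotProduct]
      rw [← Finset.sum_subset (Finset.subset_univ ({x, y} : Finset V))
        (fun i _ hi => by simp [h1 i hi]),
        Finset.sum_pair (fun h => hne (h.symm))]
    have hvy : v y = 0 := by
      have := h2 x (by simp)
      rw [key x, hxx, hBxy] at this
      simpa using this
    have hvx : v x = 0 := by
      have := h2 y (by simp)
      rw [key y, hByx, hvy] at this
      simpa using this
    funext i
    by_cases hi : i ∈ ({x, y} : Finset V)
    · rcases Finset.mem_insert.mp hi with h | h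
      · rw [h]; exact hvx
      · rw [Finset.mem_singleton.mp h]; exact hvy
    · exact h1 i hi
  · -- B x x ≠ 0 : take y = x
    refine ⟨x, hx, (tmap_inj_iff B _).mpr fun v h1 h2 => ?_⟩
    have hvx : v x = 0 := by
      have h2x := h2 x (by simp)
      have : B.mulVec v x = B x x * v x := by
        simp only [Matrix.mulVec, dotProduct]
        refine Finset.sum_eq_single x (fun i _ hi => ?_) (by simp)
        rw [h1 i (by simp [hi]), mul_zero]
      rw [this] at h2x
      rcases mul_eq_zero.mp h2x with h | h
      · exact absurd h hxx
      · exact h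
    funext i
    by_cases hi : i = x
    · rw [hi]; exact hvx
    · exact h1 i (by simp [hi])

/-- Principal pivot transform: pivoting a symmetric `A` at a nonsingular set `X`
yields a symmetric `B` with `A[X ∆ Z]` nonsingular iff `B[Z]` is. -/
lemma pivot (A : Matrix V V (ZMod 2)) (hA : A.IsSymm) (X : Finset V)
    (hX : Function.Injective (Tmap A X)) :
    ∃ B : Matrix V V (ZMod 2), B.IsSymm ∧
      ∀ Z : Finset V, (Function.Injective (Tmap B Z) ↔
        Function.Injective (Tmap A (symmDiff X Z))) := by
  have hsurj : Function.Surjective (Tmap A X) := LinearMap.injective_iff_surjective.mp hX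
  have hbij : Function.Bijective (Tmap A X) := ⟨hX, hsurj⟩
  let e : (V → ZMod 2) ≃ₗ[ZMod 2] (V → ZMod 2) := LinearEquiv.ofBijective _ hbij
  have heapp : ∀ u, e u = Tmap A X u := fun u => rfl
  let φ : (V → ZMod 2) →ₗ[ZMod 2] (V → ZMod 2) :=
    Smap A X ∘ₗ (e.symm : (V → ZMod 2) →ₗ[ZMod 2] (V → ZMod 2))
  set B := LinearMap.toMatrix' φ with hBdef
  have hBmul : ∀ w, B.mulVec w = φ w := fun w => by
    rw [← Matrix.toLin'_apply, hBdef, Matrix.toLin'_toMatrix']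
  have hφT : ∀ u, φ (Tmap A X u) = Smap A X u := fun u => by
    show Smap A X (e.symm (Tmap A X u)) = Smap A X u
    rw [← heapp, e.symm_apply_apply]
  -- symmetry
  have hpt : ∀ (u u' : V → ZMod 2) (i : V),
      Smap A X u i * Tmap A X u' i + Smap A X u' i * Tmap A X u i
        = u i * A.mulVec u' i + u' i * A.mulVec u i := by
    intro u u' i
    by_cases hi : i ∈ X <;> simp [hi] <;> ring
  have hdot : ∀ u u', Smap A X u ⬝ᵥ Tmap A X u' = Smap A X u' ⬝ᵥ Tmap A X u := by
    intro u u'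
    have h2 : (u ⬝ᵥ A.mulVec u') = u' ⬝ᵥ A.mulVec u := by
      rw [Matrix.dotProduct_mulVec, ← Matrix.mulVec_transpose, hA, dotProduct_comm]
    have h1 : Smap A X u ⬝ᵥ Tmap A X u' + Smap A X u' ⬝ᵥ Tmap A X u
        = u ⬝ᵥ A.mulVec u' + u' ⬝ᵥ A.mulVec u := by
      simp only [dotProduct]
      rw [← Finset.sum_add_distrib, ← Finset.sum_add_distrib]
      exact Finset.sum_congr rfl fun i _ => hpt u u' i
    have h3 : Smap A X u ⬝ᵥ Tmap A X u' + Smap A X u' ⬝ᵥ Tmap A X u = 0 := by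
      rw [h1, h2, CharTwo.add_self_eq_zero]
    calc Smap A X u ⬝ᵥ Tmap A X u'
        = Smap A X u ⬝ᵥ Tmap A X u' + (Smap A X u' ⬝ᵥ Tmap A X u + Smap A X u' ⬝ᵥ Tmap A X u) := by
          rw [CharTwo.add_self_eq_zero, add_zero]
      _ = (Smap A X u ⬝ᵥ Tmap A X u' + Smap A X u' ⬝ᵥ Tmap A X u) + Smap A X u' ⬝ᵥ Tmap A X u := by
          ring
      _ = Smap A X u' ⬝ᵥ Tmap A X u := by rw [h3, zero_add]
  have hφdot : ∀ v w, φ v ⬝ᵥ w = φ w ⬝ᵥ v := by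
    intro v w
    obtain ⟨u, rfl⟩ := hsurj v
    obtain ⟨u', rfl⟩ := hsurj w
    rw [hφT, hφT]
    exact hdot u u'
  have hBsymm : B.IsSymm := by
    rw [Matrix.IsSymm]
    ext i j
    rw [Matrix.transpose_apply]
    have happ : ∀ i j : V, B i j = φ (Pi.single j 1) i := by
      intro i j
      rw [hBdef, LinearMap.toMatrix'_apply]
    have := hφdot (Pi.single i 1) (Pi.single j 1)
    rw [dotProduct_single, dotProduct_single, mul_one, mul_one] at this
    rw [happ j i, happ i j, this]
  refine ⟨B, hBsymm, fun Z => ?_⟩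
  have hcomp : ∀ u, Tmap B Z (Tmap A X u) = Tmap A (symmDiff X Z) u := by
    intro u
    funext i
    have hBw : B.mulVec (Tmap A X u) i = Smap A X u i := by
      rw [hBmul, hφT]
    by_cases hiZ : i ∈ Z <;> by_cases hiX : i ∈ X <;>
      simp [hiZ, hiX, hBw, Finset.mem_symmDiff]
  constructor
  · intro h
    have heq : ⇑(Tmap A (symmDiff X Z)) = ⇑(Tmap B Z) ∘ ⇑(Tmap A X) :=
      funext fun u => (hcomp u).symm
    rw [heq]
    exact h.comp hX
  · intro h a b hab
    obtain ⟨u, rfl⟩ := hsurj a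
    obtain ⟨u', rfl⟩ := hsurj b
    have : Tmap A (symmDiff X Z) u = Tmap A (symmDiff X Z) u' := by
      rw [← hcomp, ← hcomp, hab]
    rw [h this]

/-- For any graph `H` (loops allowed) with symmetric GF(2) adjacency matrix `A`,
the set system `D_H` is a delta-matroid. -/
theorem isDeltaMatroid_DM (A : Matrix V V (ZMod 2)) (hA : A.IsSymm) :
    IsDeltaMatroid (DM A) := by
  constructor
  · exact ⟨∅, princInv_empty A⟩
  · intro X hX Y hY x hx
    have hXi := (princInv_iff A X).mp hX
    have hYi := (princInv_iff A Y).mp hY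
    obtain ⟨B, hBsymm, hB⟩ := pivot A hA X hXi
    have hZ : Function.Injective (Tmap B (symmDiff X Y)) :=
      (hB _).mpr (by rwa [symmDiff_symmDiff_cancel_left])
    obtain ⟨y, hy, hxy⟩ := exchange_base B hBsymm _ hZ hx
    exact ⟨y, hy, (princInv_iff A _).mpr ((hB {x, y}).mp hxy)⟩
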